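/- Let G be a graph, A ∈ S(G), B ∈ S(complement of G) with AB = O, and let i ≠ j be vertices with N_G(i) ⊆ N_G[j]. If i is adjacent to j in G, then b_jj = 0; if i is not adjacent to j in G, then a_ii = 0. -/
import Mathlib


/-- `A ∈ S(G)`: real symmetric matrix whose off-diagonal nonzero pattern is `E(G)`. -/
def MatIn {V : Type*} [Fintype V] (G : SimpleGraph V) (A : Matrix V V ℝ) : Prop :=
  A.IsSymm ∧ ∀ i j : V, i ≠ j → (A i j ≠ 0 ↔ G.Adj i j)

/-- `G` is complementary vanishing. -/
def CompVan {V : Type*} [Fintype V] (G : SimpleGraph V) : Prop :=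
  ∃ A B : Matrix V V ℝ, MatIn G A ∧ MatIn Gᶜ B ∧ A * B = 0

theorem stmt_2 {n : ℕ} (G : SimpleGraph (Fin n)) (A B : Matrix (Fin n) (Fin n) ℝ)
    (hA : MatIn G A) (hB : MatIn Gᶜ B) (hAB : A * B = 0) (i j : Fin n) (hij : i ≠ j)
    (hsub : G.neighborSet i ⊆ insert j (G.neighborSet j)) :
    (G.Adj i j → B j j = 0) ∧ (¬G.Adj i j → A i i = 0) := by
  have hentry : (A * B) i j = 0 := by rw [hAB]; rfl
  rw [Matrix.mul_apply] at hentry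
  have hz : ∀ c ∈ (Finset.univ : Finset (Fin n)), c ≠ i ∧ c ≠ j → A i c * B c j = 0 := by
    rintro c - ⟨hci, hcj⟩
    by_cases hAc : A i c = 0
    · rw [hAc, zero_mul]
    · have hadj : G.Adj i c := (hA.2 i c (Ne.symm hci)).1 hAc
      have : c ∈ insert j (G.neighborSet j) := hsub hadj
      have hcj' : G.Adj j c := by
        rcases this with h | h
        · exact absurd h hcj
        · exact h
      have : B c j = 0 := by
        by_contra hBc
        exact ((hB.2 c j hcj).1 hBc).2 hcj'.symm
      rw [this, mul_zero]
  have hsum : ∑ k, A i k * B k j = A i i * B i j + A i j * B j j :=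
    Finset.sum_eq_add i j hij hz (fun h => absurd (Finset.mem_univ i) h)
      (fun h => absurd (Finset.mem_univ j) h)
  rw [hsum] at hentry
  constructor
  · intro hadj
    have hBij : B i j = 0 := by
      by_contra hBij
      exact ((hB.2 i j hij).1 hBij).2 hadj
    have hAij : A i j ≠ 0 := (hA.2 i j hij).2 hadj
    rw [hBij, mul_zero, zero_add] at hentry
    exact (mul_eq_zero.1 hentry).resolve_left hAij
  · intro hnadj
    have hAij : A i j = 0 := by
      by_contra hAij
      exact hnadj ((hA.2 i j hij).1 hAij)
    have hBij : B i j ≠ 0 := (hB.2 i j hij).2 ⟨hij, hnadj⟩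
    rw [hAij, zero_mul, add_zero] at hentry
    exact (mul_eq_zero.1 hentry).resolve_right hBij
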